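/- Upcrossing-variation inequality for a single grid: for any continuous f : [0,T] → ℝ, any δ > 0, and any p > 0, the strong p-variation satisfies var_p(f,[0,T]) ≥ δ^p · M_T(f,δ), where M_T(f,δ) = Σ_{k∈ℤ} M_T(f,(kδ,(k+1)δ)) is the total number of upcrossings of δ-grid intervals. -/

import Mathlib

open scoped ENNReal

noncomputable section

/-- Strong `p`-variation of `f` over `[a,b]`: the supremum over all finite
subdivisions `a = t₀ < t₁ < ⋯ < tₙ = b` of `Σᵢ |f(tᵢ) − f(tᵢ₋₁)|^p`. -/
def pVar (p : ℝ) (f : ℝ → ℝ) (a b : ℝ) : ℝ≥0∞ :=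
  ⨆ (n : ℕ) (t : Fin (n + 1) → ℝ)
    (_ : StrictMono t ∧ t 0 = a ∧ t (Fin.last n) = b),
    ∑ i : Fin n, ENNReal.ofReal (|f (t i.succ) - f (t i.castSucc)| ^ p)

/-- `v` is a strong variation exponent of `f` over `[0,T]`:
`var_p(f)` is finite for `p > v` and infinite for `p < v`. -/
def IsVex (T : ℝ) (f : ℝ → ℝ) (v : ℝ≥0∞) : Prop :=
  (∀ p : ℝ, 0 < p → v < ENNReal.ofReal p → pVar p f 0 T < ⊤) ∧
  (∀ p : ℝ, 0 < p → ENNReal.ofReal p < v → pVar p f 0 T = ⊤)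

/-- The strong variation exponent of `f` over `[0,T]`. -/
def vex (T : ℝ) (f : ℝ → ℝ) : ℝ≥0∞ :=
  sInf {v : ℝ≥0∞ | ∀ p : ℝ, 0 < p → v < ENNReal.ofReal p → pVar p f 0 T < ⊤}

/-- The sample space: continuous real-valued functions on `[0,T]`. -/
def GSpace (T : ℝ) := {f : ℝ → ℝ // ContinuousOn f (Set.Icc 0 T)}

/-- The filtration: `ℱ_t` is generated by the evaluation maps `ω ↦ ω(s)`, `s ∈ [0,t]`. -/
def gFiltration (T t : ℝ) : MeasurableSpace (GSpace T) :=
  ⨆ s ∈ Set.Icc (0 : ℝ) t, MeasurableSpace.comap (fun ω : GSpace T => ω.1 s) inferInstance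

/-- An elementary trading strategy: an increasing sequence of stopping times
`τₙ` (with values in `[0,T] ∪ {∞}`, only finitely many finite on each `ω`)
together with bounded `ℱ_{τₙ}`-measurable portfolios `hₙ`. -/
structure ElemStrategy (T : ℝ) where
  τ : ℕ → GSpace T → ℝ≥0∞
  h : ℕ → GSpace T → ℝ
  mono : ∀ n ω, τ n ω ≤ τ (n + 1) ω
  codom : ∀ n ω, τ n ω ≤ ENNReal.ofReal T ∨ τ n ω = ⊤
  fin : ∀ ω, Set.Finite {n | τ n ω ≠ ⊤}
  stopping : ∀ n (t : ℝ), (gFiltration T t).MeasurableSet' {ω | τ n ω ≤ ENNReal.ofReal t}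
  bdd : ∀ n, ∃ C : ℝ, ∀ ω, |h n ω| ≤ C
  adapted : ∀ n (B : Set ℝ), MeasurableSet B → ∀ t : ℝ,
    (gFiltration T t).MeasurableSet' ({ω | h n ω ∈ B} ∩ {ω | τ n ω ≤ ENNReal.ofReal t})

/-- The elementary capital process
`K_t(ω) = c + Σₙ hₙ(ω) (ω(τ_{n+1} ∧ t) − ω(τₙ ∧ t))`. -/
def ElemStrategy.capital {T : ℝ} (G : ElemStrategy T) (c : ℝ) (t : ℝ) (ω : GSpace T) : ℝ :=
  c + ∑' n : ℕ,
    G.h n ω * (ω.1 ((G.τ (n + 1) ω ⊓ ENNReal.ofReal t).toReal)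
      - ω.1 ((G.τ n ω ⊓ ENNReal.ofReal t).toReal))

/-- A positive capital process: a countable sum of positive elementary capital
processes with summable positive initial capitals. -/
structure PosCapital (T : ℝ) where
  G : ℕ → ElemStrategy T
  c : ℕ → ℝ
  c_nonneg : ∀ n, 0 ≤ c n
  c_summable : Summable c
  pos : ∀ n (t : ℝ), t ∈ Set.Icc 0 T → ∀ ω, 0 ≤ (G n).capital (c n) t ω

/-- The value (in `[0,∞]`) of a positive capital process at time `t`. -/
def PosCapital.value {T : ℝ} (S : PosCapital T) (t : ℝ) (ω : GSpace T) : ℝ≥0∞ :=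
  ∑' n : ℕ, ENNReal.ofReal ((S.G n).capital (S.c n) t ω)

/-- The initial value `S₀ = Σₙ cₙ` of a positive capital process. -/
def PosCapital.init {T : ℝ} (S : PosCapital T) : ℝ≥0∞ :=
  ∑' n : ℕ, ENNReal.ofReal (S.c n)

/-- Game-theoretic upper probability of `E ⊆ Ω`:
`inf {S₀ : S positive capital process, S_T ≥ 1_E}`. -/
def upperProb (T : ℝ) (E : Set (GSpace T)) : ℝ≥0∞ :=
  ⨅ (S : PosCapital T) (_ : ∀ ω, E.indicator (fun _ => (1 : ℝ≥0∞)) ω ≤ S.value T ω), S.init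

/-- The number of upcrossings (as an element of `[0,∞]`) of the open interval
`(a,b)` by `f` during the time interval `[0,t]`. -/
def upcross (f : ℝ → ℝ) (a b t : ℝ) : ℝ≥0∞ :=
  ⨆ (n : ℕ) (u : Fin n → ℝ) (v : Fin n → ℝ)
    (_ : (∀ i, 0 ≤ u i ∧ u i < v i ∧ v i ≤ t) ∧
         (∀ i j : Fin n, i < j → v i < u j) ∧
         (∀ i, f (u i) < a ∧ b < f (v i))),
    (n : ℝ≥0∞)

/-- `M_t(f,δ) = Σ_{k∈ℤ} M_t(f,(kδ,(k+1)δ))`: the total number of upcrossings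
of the intervals of the `δ`-grid by `f` during `[0,t]`. -/
def gridUpcross (f : ℝ → ℝ) (δ t : ℝ) : ℝ≥0∞ :=
  ∑' k : ℤ, upcross f (k * δ) ((k + 1) * δ) t

/-- The successive hitting times of new points of the grid `δℤ`:
`τ₀ = 0`, `τ_{n+1} = inf {t ∈ (τₙ, T] : f(t) ∈ δℤ \ {f(τₙ)}}` (with `inf ∅ = ∞`). -/
def gridTimes (T δ : ℝ) (f : ℝ → ℝ) : ℕ → ℝ≥0∞
  | 0 => 0
  | n + 1 => sInf {s : ℝ≥0∞ | ∃ t : ℝ, s = ENNReal.ofReal t ∧ t ≤ T ∧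
      gridTimes T δ f n < ENNReal.ofReal t ∧ (∃ k : ℤ, f t = (k : ℝ) * δ) ∧
      f t ≠ f ((gridTimes T δ f n).toReal)}



open Set in
lemma cross_refine {f : ℝ → ℝ} {u v A B : ℝ} (hf : ContinuousOn f (Set.Icc u v))
    (huv : u ≤ v) (hA : f u < A) (hAB : A < B) (hB : B < f v) :
    ∃ s t : ℝ, u ≤ s ∧ s < t ∧ t ≤ v ∧ f s = A ∧ f t = B ∧
      ∀ x, s < x → x < t → A < f x ∧ f x < B := by
  set S : Set ℝ := Icc u v ∩ f ⁻¹' {A} with hSdef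
  have hSne : S.Nonempty := by
    obtain ⟨x, hx, hfx⟩ := intermediate_value_Icc huv hf ⟨hA.le, (hAB.trans hB).le⟩
    exact ⟨x, hx, hfx⟩
  have hSclosed : IsClosed S :=
    hf.preimage_isClosed_of_isClosed isClosed_Icc isClosed_singleton
  have hSbdd : BddAbove S := bddAbove_Icc.mono inter_subset_left
  set s := sSup S with hsdef
  have hs : s ∈ S := hSclosed.csSup_mem hSne hSbdd
  have hfs : f s = A := hs.2
  have hsu : u ≤ s := hs.1.1
  have hsv : s ≤ v := hs.1.2
  have hf2 : ContinuousOn f (Icc s v) := hf.mono (Icc_subset_Icc hsu le_rfl)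
  set Tt : Set ℝ := Icc s v ∩ f ⁻¹' {B} with hTdef
  have hTne : Tt.Nonempty := by
    obtain ⟨x, hx, hfx⟩ := intermediate_value_Icc hsv hf2 ⟨hfs ▸ hAB.le, hB.le⟩
    exact ⟨x, hx, hfx⟩
  have hTclosed : IsClosed Tt :=
    hf2.preimage_isClosed_of_isClosed isClosed_Icc isClosed_singleton
  have hTbdd : BddBelow Tt := bddBelow_Icc.mono inter_subset_left
  set t := sInf Tt with htdef
  have ht : t ∈ Tt := hTclosed.csInf_mem hTne hTbdd
  have hft : f t = B := ht.2
  have hst : s < t := by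
    rcases lt_or_eq_of_le ht.1.1 with h | h
    · exact h
    · exact absurd (by rw [← hfs, h, hft] : A = B) hAB.ne
  refine ⟨s, t, hsu, hst, ht.1.2, hfs, hft, fun x hsx hxt => ?_⟩
  constructor
  · by_contra hcon
    push_neg at hcon
    have hxt' : x ≤ t := hxt.le
    have hcf : ContinuousOn f (Icc x t) :=
      hf.mono (Icc_subset_Icc (hsu.trans hsx.le) ht.1.2)
    obtain ⟨y, hy, hfy⟩ := intermediate_value_Icc hxt' hcf ⟨hcon, hft ▸ hAB.le⟩
    have hyS : y ∈ S := ⟨⟨hsu.trans (hsx.le.trans hy.1), hy.2.trans ht.1.2⟩, hfy⟩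
    have : y ≤ s := le_csSup hSbdd hyS
    exact absurd (hsx.trans_le hy.1) (not_lt.mpr this)
  · by_contra hcon
    push_neg at hcon
    have hcf : ContinuousOn f (Icc s x) :=
      hf.mono (Icc_subset_Icc hsu (hxt.le.trans ht.1.2))
    obtain ⟨y, hy, hfy⟩ := intermediate_value_Icc hsx.le hcf ⟨hfs ▸ hAB.le, hcon⟩
    have hyT : y ∈ Tt := ⟨⟨hy.1, hy.2.trans (hxt.le.trans ht.1.2)⟩, hfy⟩
    have : t ≤ y := csInf_le hTbdd hyT
    exact absurd (hy.2.trans_lt hxt) (not_lt.mpr this)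

open Set Finset in
lemma pVar_ge_of_disjoint_intervals (T δ p : ℝ) (hT : 0 < T) (hδ : 0 < δ) (hp : 0 < p)
    (f : ℝ → ℝ) {ι : Type} [Fintype ι] (lo hi : ι → ℝ)
    (h1 : ∀ j, 0 ≤ lo j ∧ lo j < hi j ∧ hi j ≤ T)
    (h2 : ∀ j j', j ≠ j' → Set.Ioo (lo j) (hi j) ∩ Set.Ioo (lo j') (hi j') = ∅)
    (h3 : ∀ j, δ ≤ |f (hi j) - f (lo j)|) :
    (Fintype.card ι : ℝ≥0∞) * ENNReal.ofReal (δ ^ p) ≤ pVar p f 0 T := by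
  classical
  set E : Finset ℝ :=
    insert 0 (insert T (Finset.image lo Finset.univ ∪ Finset.image hi Finset.univ)) with hE
  have h0E : (0 : ℝ) ∈ E := by simp [hE]
  have hTE : T ∈ E := by simp [hE]
  have hloE : ∀ j, lo j ∈ E := fun j => by simp [hE]
  have hhiE : ∀ j, hi j ∈ E := fun j => by simp [hE]
  have hmemE : ∀ x ∈ E, 0 ≤ x ∧ x ≤ T := by
    intro x hx
    simp only [hE, Finset.mem_insert, Finset.mem_union, Finset.mem_image,
      Finset.mem_univ, true_and] at hx
    rcases hx with rfl | rfl | ⟨j, rfl⟩ | ⟨j, rfl⟩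
    · exact ⟨le_rfl, hT.le⟩
    · exact ⟨hT.le, le_rfl⟩
    · exact ⟨(h1 j).1, ((h1 j).2.1.le.trans (h1 j).2.2)⟩
    · exact ⟨(h1 j).1.trans (h1 j).2.1.le, (h1 j).2.2⟩
  have hEne : E.Nonempty := ⟨0, h0E⟩
  set n : ℕ := E.card - 1 with hn
  have hcard : E.card = n + 1 := (Nat.succ_pred_eq_of_pos hEne.card_pos).symm
  set g : Fin (n + 1) → ℝ := fun i => (E.orderIsoOfFin hcard i : ℝ) with hg
  have hgmono : StrictMono g := fun i j h =>
    Subtype.coe_lt_coe.mpr ((E.orderIsoOfFin hcard).strictMono h)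
  have hgmem : ∀ i, g i ∈ E := fun i => (E.orderIsoOfFin hcard i).2
  have hgsurj : ∀ x ∈ E, ∃ i, g i = x := fun x hx =>
    ⟨(E.orderIsoOfFin hcard).symm ⟨x, hx⟩,
      congrArg Subtype.val ((E.orderIsoOfFin hcard).apply_symm_apply ⟨x, hx⟩)⟩
  have hg0 : g 0 = 0 := by
    obtain ⟨i, hi0⟩ := hgsurj 0 h0E
    exact le_antisymm (hi0 ▸ hgmono.monotone (Fin.zero_le i)) (hmemE _ (hgmem 0)).1
  have hgl : g (Fin.last n) = T := by
    obtain ⟨i, hiT⟩ := hgsurj T hTE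
    exact le_antisymm (hmemE _ (hgmem _)).2 (hiT ▸ hgmono.monotone (Fin.le_last i))
  -- no grid point strictly inside any interval
  have hno : ∀ (j : ι) (x : ℝ), x ∈ E → ¬(lo j < x ∧ x < hi j) := by
    intro j x hx ⟨hx1, hx2⟩
    simp only [hE, Finset.mem_insert, Finset.mem_union, Finset.mem_image,
      Finset.mem_univ, true_and] at hx
    rcases hx with rfl | hxT | ⟨j', rfl⟩ | ⟨j', rfl⟩
    · exact absurd ((h1 j).1.trans_lt hx1) (lt_irrefl 0)
    · rw [hxT] at hx2; exact absurd hx2 (not_lt.mpr (h1 j).2.2)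
    · have hjj : j' ≠ j := fun h => absurd (h ▸ hx1) (lt_irrefl _)
      set y : ℝ := (lo j' + min (hi j') (hi j)) / 2 with hy
      have hy1 : lo j' < y := by
        have : lo j' < min (hi j') (hi j) := lt_min (h1 j').2.1 hx2
        simp only [hy]; linarith
      have hy2 : y < min (hi j') (hi j) := by
        have : lo j' < min (hi j') (hi j) := lt_min (h1 j').2.1 hx2
        simp only [hy]; linarith
      have : y ∈ Set.Ioo (lo j') (hi j') ∩ Set.Ioo (lo j) (hi j) :=
        ⟨⟨hy1, hy2.trans_le (min_le_left _ _)⟩,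
         ⟨hx1.trans hy1, hy2.trans_le (min_le_right _ _)⟩⟩
      exact absurd this (by rw [h2 j' j hjj]; exact Set.notMem_empty y)
    · have hjj : j' ≠ j := fun h => absurd (h ▸ hx2) (lt_irrefl _)
      set y : ℝ := (max (lo j') (lo j) + hi j') / 2 with hy
      have hy1 : max (lo j') (lo j) < y := by
        have : max (lo j') (lo j) < hi j' := max_lt (h1 j').2.1 hx1
        simp only [hy]; linarith
      have hy2 : y < hi j' := by
        have : max (lo j') (lo j) < hi j' := max_lt (h1 j').2.1 hx1
        simp only [hy]; linarith
      have : y ∈ Set.Ioo (lo j') (hi j') ∩ Set.Ioo (lo j) (hi j) :=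
        ⟨⟨(le_max_left _ _).trans_lt hy1, hy2⟩,
         ⟨(le_max_right _ _).trans_lt hy1, hy2.trans hx2⟩⟩
      exact absurd this (by rw [h2 j' j hjj]; exact Set.notMem_empty y)
  -- the index of lo j in the enumeration
  have key : ∀ j : ι, ∃ i : Fin n, g i.castSucc = lo j ∧ g i.succ = hi j := by
    intro j
    obtain ⟨a, ha⟩ := hgsurj (lo j) (hloE j)
    obtain ⟨b, hb⟩ := hgsurj (hi j) (hhiE j)
    have hab : a < b := hgmono.lt_iff_lt.mp (by rw [ha, hb]; exact (h1 j).2.1)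
    have hane : a ≠ Fin.last n := by
      intro h
      rw [h, hgl] at ha
      exact absurd ((h1 j).2.1.trans_le (h1 j).2.2) (ha ▸ lt_irrefl _)
    refine ⟨a.castPred hane, ?_, ?_⟩
    · rw [Fin.castSucc_castPred]; exact ha
    · have hsle : (a.castPred hane).succ ≤ b := by
        rw [← Fin.castSucc_lt_iff_succ_le, Fin.castSucc_castPred]
        exact hab
      have hub : g ((a.castPred hane).succ) ≤ hi j := hb ▸ hgmono.monotone hsle
      have hlb : lo j < g ((a.castPred hane).succ) := by
        conv_lhs => rw [← ha]
        conv_lhs => rw [← Fin.castSucc_castPred a hane]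
        exact hgmono Fin.castSucc_lt_succ
      rcases lt_or_eq_of_le hub with h | h
      · exact absurd ⟨hlb, h⟩ (hno j _ (hgmem _))
      · exact h
  choose idx hidx1 hidx2 using key
  have hidxinj : Function.Injective idx := by
    intro j j' h
    by_contra hne
    have hlo : lo j = lo j' := by rw [← hidx1 j, ← hidx1 j', h]
    have hhi : hi j = hi j' := by rw [← hidx2 j, ← hidx2 j', h]
    have : (Set.Ioo (lo j) (hi j)).Nonempty := Set.nonempty_Ioo.mpr (h1 j).2.1
    obtain ⟨y, hy⟩ := this
    have : y ∈ Set.Ioo (lo j) (hi j) ∩ Set.Ioo (lo j') (hi j') :=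
      ⟨hy, by rw [← hlo, ← hhi]; exact hy⟩
    rw [h2 j j' hne] at this
    exact this
  -- sum bound
  have hsum : (Fintype.card ι : ℝ≥0∞) * ENNReal.ofReal (δ ^ p) ≤
      ∑ i : Fin n, ENNReal.ofReal (|f (g i.succ) - f (g i.castSucc)| ^ p) := by
    have e1 : (Fintype.card ι : ℝ≥0∞) * ENNReal.ofReal (δ ^ p) =
        ∑ _j : ι, ENNReal.ofReal (δ ^ p) := by
      rw [Finset.sum_const, Finset.card_univ, nsmul_eq_mul]
    rw [e1]
    have e2 : ∀ j : ι, ENNReal.ofReal (δ ^ p) ≤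
        ENNReal.ofReal (|f (g (idx j).succ) - f (g (idx j).castSucc)| ^ p) := by
      intro j
      rw [hidx1 j, hidx2 j]
      exact ENNReal.ofReal_le_ofReal (Real.rpow_le_rpow hδ.le (h3 j) hp.le)
    calc ∑ _j : ι, ENNReal.ofReal (δ ^ p)
        ≤ ∑ j : ι, ENNReal.ofReal (|f (g (idx j).succ) - f (g (idx j).castSucc)| ^ p) :=
          Finset.sum_le_sum (fun j _ => e2 j)
      _ = ∑ i ∈ Finset.image idx Finset.univ,
            ENNReal.ofReal (|f (g i.succ) - f (g i.castSucc)| ^ p) :=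
          by rw [Finset.sum_image (fun x _ y _ h => hidxinj h)]
      _ ≤ ∑ i : Fin n, ENNReal.ofReal (|f (g i.succ) - f (g i.castSucc)| ^ p) :=
          Finset.sum_le_sum_of_subset (Finset.subset_univ _)
  refine hsum.trans ?_
  rw [pVar]
  refine le_trans ?_ (le_iSup _ n)
  refine le_trans ?_ (le_iSup _ g)
  exact le_iSup (fun _ : StrictMono g ∧ g 0 = 0 ∧ g (Fin.last n) = T => ∑ i : Fin n,
    ENNReal.ofReal (|f (g i.succ) - f (g i.castSucc)| ^ p)) ⟨hgmono, hg0, hgl⟩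


lemma pVar_key (T δ p : ℝ) (hT : 0 < T) (hδ : 0 < δ) (hp : 0 < p)
    (f : ℝ → ℝ) (hf : ContinuousOn f (Set.Icc 0 T)) (F : Finset ℤ) (m : ℤ → ℕ)
    (hw : ∀ k ∈ F, ∃ u v : Fin (m k) → ℝ,
      (∀ i, 0 ≤ u i ∧ u i < v i ∧ v i ≤ T) ∧
      (∀ i j : Fin (m k), i < j → v i < u j) ∧
      (∀ i, f (u i) < (k : ℝ) * δ ∧ ((k : ℝ) + 1) * δ < f (v i))) :
    ∑ k ∈ F, (m k : ℝ≥0∞) * ENNReal.ofReal (δ ^ p) ≤ pVar p f 0 T := by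
  classical
  choose u v h1 h2 h3 using hw
  have hcr : ∀ (j : (k : {x // x ∈ F}) × Fin (m k.1)),
      ∃ s t : ℝ, u j.1.1 j.1.2 j.2 ≤ s ∧ s < t ∧ t ≤ v j.1.1 j.1.2 j.2 ∧
        f s = (j.1.1 : ℝ) * δ ∧ f t = ((j.1.1 : ℝ) + 1) * δ ∧
        ∀ x, s < x → x < t → (j.1.1 : ℝ) * δ < f x ∧ f x < ((j.1.1 : ℝ) + 1) * δ := by
    rintro ⟨⟨k, hk⟩, i⟩
    refine cross_refine (hf.mono (Set.Icc_subset_Icc (h1 k hk i).1 (h1 k hk i).2.2))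
      (h1 k hk i).2.1.le (h3 k hk i).1 ?_ (h3 k hk i).2
    have hlt : (k : ℝ) < (k : ℝ) + 1 := by linarith
    exact mul_lt_mul_of_pos_right hlt hδ
  choose lo hi hlos hlth hhiv hflo hfhi hmid using hcr
  have h1' : ∀ j, 0 ≤ lo j ∧ lo j < hi j ∧ hi j ≤ T := fun j =>
    ⟨(h1 _ _ _).1.trans (hlos j), hlth j, (hhiv j).trans (h1 _ _ _).2.2⟩
  have h2' : ∀ j j', j ≠ j' → Set.Ioo (lo j) (hi j) ∩ Set.Ioo (lo j') (hi j') = ∅ := by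
    intro j j' hne
    rw [Set.eq_empty_iff_forall_notMem]
    rintro x ⟨⟨hx1, hx2⟩, hx3, hx4⟩
    have hb := hmid j x hx1 hx2
    have hb' := hmid j' x hx3 hx4
    obtain ⟨⟨k, hk⟩, i⟩ := j
    obtain ⟨⟨k', hk'⟩, i'⟩ := j'
    by_cases hkk : k = k'
    · subst hkk
      have hkk2 : hk = hk' := rfl
      have hii : i ≠ i' := by
        intro h; exact hne (by rw [h])
      rcases hii.lt_or_gt with h | h
      · have hle : hi ⟨⟨k, hk⟩, i⟩ ≤ lo ⟨⟨k, hk⟩, i'⟩ :=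
          (hhiv _).trans ((h2 k hk i i' h).le.trans (hlos ⟨⟨k, hk⟩, i'⟩))
        exact absurd (hx2.trans_le hle) (not_lt.mpr hx3.le)
      · have hle : hi ⟨⟨k, hk⟩, i'⟩ ≤ lo ⟨⟨k, hk⟩, i⟩ :=
          (hhiv _).trans ((h2 k hk i' i h).le.trans (hlos ⟨⟨k, hk⟩, i⟩))
        exact absurd (hx4.trans_le hle) (not_lt.mpr hx1.le)
    · have e1' : (k : ℝ) < (k' : ℝ) + 1 := (mul_lt_mul_iff_of_pos_right hδ).mp (hb.1.trans hb'.2)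
      have e2' : (k' : ℝ) < (k : ℝ) + 1 := (mul_lt_mul_iff_of_pos_right hδ).mp (hb'.1.trans hb.2)
      have e1 : k < k' + 1 := by exact_mod_cast e1'
      have e2 : k' < k + 1 := by exact_mod_cast e2'
      omega
  have h3' : ∀ j, δ ≤ |f (hi j) - f (lo j)| := by
    intro j
    rw [hfhi j, hflo j]
    have he : ((j.1.1 : ℝ) + 1) * δ - (j.1.1 : ℝ) * δ = δ := by ring
    rw [he, abs_of_pos hδ]
  have hmain := pVar_ge_of_disjoint_intervals T δ p hT hδ hp f lo hi h1' h2' h3'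
  refine le_trans (le_of_eq ?_) hmain
  have hcι : Fintype.card ((k : {x // x ∈ F}) × Fin (m k.1)) = ∑ k ∈ F, m k := by
    rw [Fintype.card_sigma]
    simp only [Fintype.card_fin]
    exact Finset.sum_coe_sort F m
  rw [hcι]
  rw [Nat.cast_sum, Finset.sum_mul]

/-- upcrossing–variation inequality for a single grid:
`var_p(f,[0,T]) ≥ δ^p · M_T(f,δ)`. -/
theorem stmt19 (T δ p : ℝ) (hT : 0 < T) (hδ : 0 < δ) (hp : 0 < p)
    (f : ℝ → ℝ) (hf : ContinuousOn f (Set.Icc 0 T)) :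
    ENNReal.ofReal (δ ^ p) * gridUpcross f δ T ≤ pVar p f 0 T := by
  classical
  rw [gridUpcross, ← ENNReal.tsum_mul_left, ENNReal.tsum_eq_iSup_sum]
  refine iSup_le fun F => ?_
  set P : ℤ → ℕ → Prop := fun k n => ∃ u v : Fin n → ℝ,
      (∀ i, 0 ≤ u i ∧ u i < v i ∧ v i ≤ T) ∧
      (∀ i j : Fin n, i < j → v i < u j) ∧
      (∀ i, f (u i) < (k : ℝ) * δ ∧ ((k : ℝ) + 1) * δ < f (v i)) with hP
  have hP0 : ∀ k : ℤ, P k 0 :=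
    fun k => ⟨Fin.elim0, Fin.elim0, fun i => i.elim0, fun i => i.elim0, fun i => i.elim0⟩
  have hub : ∀ k : ℤ, upcross f (k * δ) ((k + 1) * δ) T ≤
      ⨆ n : ℕ, (Nat.findGreatest (P k) n : ℝ≥0∞) := by
    intro k
    rw [upcross]
    refine iSup_le fun n => iSup_le fun uu => iSup_le fun vv => iSup_le fun hc => ?_
    refine le_iSup_of_le n ?_
    exact Nat.cast_le.mpr (Nat.le_findGreatest le_rfl ⟨uu, vv, hc.1, hc.2.1, hc.2.2⟩)
  calc ∑ k ∈ F, ENNReal.ofReal (δ ^ p) * upcross f (k * δ) ((k + 1) * δ) T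
      ≤ ∑ k ∈ F, ENNReal.ofReal (δ ^ p) * ⨆ n : ℕ, (Nat.findGreatest (P k) n : ℝ≥0∞) :=
        Finset.sum_le_sum fun k _ => mul_le_mul_right (hub k) _
    _ = ∑ k ∈ F, ⨆ n : ℕ, ENNReal.ofReal (δ ^ p) * (Nat.findGreatest (P k) n : ℝ≥0∞) := by
        simp_rw [ENNReal.mul_iSup]
    _ = ⨆ n : ℕ, ∑ k ∈ F, ENNReal.ofReal (δ ^ p) * (Nat.findGreatest (P k) n : ℝ≥0∞) :=
        ENNReal.finsetSum_iSup_of_monotone fun k a b hab =>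
          mul_le_mul_right (Nat.cast_le.mpr (Nat.findGreatest_mono (fun _ h => h) hab)) _
    _ ≤ pVar p f 0 T := by
        refine iSup_le fun n => ?_
        have hkey := pVar_key T δ p hT hδ hp f hf F (fun k => Nat.findGreatest (P k) n)
          (fun k _ => Nat.findGreatest_spec (Nat.zero_le n) (hP0 k))
        refine le_trans (le_of_eq ?_) hkey
        exact Finset.sum_congr rfl fun k _ => mul_comm _ _
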